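/- Let X and Y be elements of SU(2), the group of 2×2 complex unitary matrices of determinant 1. Then there exists a diagonal matrix k ∈ SU(2) with k X k⁻¹ = Y if and only if the (1,1) entries of X and Y are equal. -/

import Mathlib

open Matrix Complex

lemma su2_star_eq_adjugate (A : Matrix (Fin 2) (Fin 2) ℂ)
    (hA : A ∈ Matrix.specialUnitaryGroup (Fin 2) ℂ) :
    star A = !![A 1 1, -(A 0 1); -(A 1 0), A 0 0] := by
  rw [Matrix.mem_specialUnitaryGroup_iff] at hA
  obtain ⟨hu, hdet⟩ := hA
  rw [Matrix.mem_unitaryGroup_iff] at hu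
  have h1 : star A = A⁻¹ := (Matrix.inv_eq_right_inv hu).symm
  have h2 : A * !![A 1 1, -(A 0 1); -(A 1 0), A 0 0] = 1 := by
    have := Matrix.mul_adjugate A
    rw [hdet, one_smul, Matrix.adjugate_fin_two] at this
    exact this
  rw [h1, ← Matrix.inv_eq_right_inv h2]

lemma su2_entries (A : Matrix (Fin 2) (Fin 2) ℂ)
    (hA : A ∈ Matrix.specialUnitaryGroup (Fin 2) ℂ) :
    A 1 1 = starRingEnd ℂ (A 0 0) ∧ A 1 0 = -starRingEnd ℂ (A 0 1) ∧
      A 0 0 * starRingEnd ℂ (A 0 0) + A 0 1 * starRingEnd ℂ (A 0 1) = 1 := by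
  have h := su2_star_eq_adjugate A hA
  have h00 : starRingEnd ℂ (A 0 0) = A 1 1 := by
    have := congrFun (congrFun h 0) 0
    simpa [Matrix.star_apply, Complex.star_def] using this
  have h01 : starRingEnd ℂ (A 1 0) = -(A 0 1) := by
    have := congrFun (congrFun h 0) 1
    simpa [Matrix.star_apply, Complex.star_def] using this
  have h10 : A 1 0 = -starRingEnd ℂ (A 0 1) := by
    have := congrArg (starRingEnd ℂ) h01
    simpa [Complex.conj_conj] using this
  have hdet := (Matrix.mem_specialUnitaryGroup_iff.mp hA).2
  rw [Matrix.det_fin_two] at hdet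
  refine ⟨h00.symm, h10, ?_⟩
  calc A 0 0 * starRingEnd ℂ (A 0 0) + A 0 1 * starRingEnd ℂ (A 0 1)
      = A 0 0 * A 1 1 - A 0 1 * A 1 0 := by rw [h00, h10]; ring
    _ = 1 := hdet

theorem stmt5 (X Y : Matrix (Fin 2) (Fin 2) ℂ)
    (hX : X ∈ Matrix.specialUnitaryGroup (Fin 2) ℂ)
    (hY : Y ∈ Matrix.specialUnitaryGroup (Fin 2) ℂ) :
    (∃ k : Matrix (Fin 2) (Fin 2) ℂ,
      k ∈ Matrix.specialUnitaryGroup (Fin 2) ℂ ∧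
      k 0 1 = 0 ∧ k 1 0 = 0 ∧
      k * X * k⁻¹ = Y) ↔ X 0 0 = Y 0 0 := by
  obtain ⟨hX11, hX10, hXn⟩ := su2_entries X hX
  obtain ⟨hY11, hY10, hYn⟩ := su2_entries Y hY
  constructor
  · rintro ⟨k, hk, hk01, hk10, rfl⟩
    have hdet := (Matrix.mem_specialUnitaryGroup_iff.mp hk).2
    rw [Matrix.det_fin_two, hk01, hk10] at hdet
    have hprod : k * !![k 1 1, 0; 0, k 0 0] = 1 := by
      ext i j
      fin_cases i <;> fin_cases j
      · simp [Matrix.mul_apply, Fin.sum_univ_two, hk01, hk10, Matrix.one_apply]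
        linear_combination hdet
      · simp [Matrix.mul_apply, Fin.sum_univ_two, hk01, hk10, Matrix.one_apply]
      · simp [Matrix.mul_apply, Fin.sum_univ_two, hk01, hk10, Matrix.one_apply]
      · simp [Matrix.mul_apply, Fin.sum_univ_two, hk01, hk10, Matrix.one_apply]
        linear_combination hdet
    have hinv : k⁻¹ = !![k 1 1, 0; 0, k 0 0] := Matrix.inv_eq_right_inv hprod
    rw [hinv]
    simp only [Matrix.mul_apply, Fin.sum_univ_two, hk01, hk10,
      Matrix.cons_val', Matrix.cons_val_zero, Matrix.cons_val_one, Matrix.head_cons,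
      Matrix.empty_val', Matrix.cons_val_fin_one, Matrix.head_fin_const, Matrix.of_apply]
    linear_combination -(X 0 0) * hdet
  · intro h
    have hbc : X 0 1 * starRingEnd ℂ (X 0 1) = Y 0 1 * starRingEnd ℂ (Y 0 1) := by
      rw [← h] at hYn
      linear_combination hXn - hYn
    by_cases hb0 : X 0 1 = 0
    · have hc0 : Y 0 1 = 0 := by
        have : Y 0 1 * starRingEnd ℂ (Y 0 1) = 0 := by rw [← hbc, hb0]; ring
        simpa using this
      have hXY : X = Y := by
        ext i j
        fin_cases i <;> fin_cases j
        · exact h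
        · show X 0 1 = Y 0 1; rw [hb0, hc0]
        · show X 1 0 = Y 1 0; rw [hX10, hY10, hb0, hc0]
        · show X 1 1 = Y 1 1; rw [hX11, hY11, h]
      exact ⟨1, Submonoid.one_mem _, by simp [Matrix.one_apply], by simp [Matrix.one_apply],
        by simp [hXY]⟩
    · have hc0 : Y 0 1 ≠ 0 := by
        intro hc0
        apply hb0
        have : X 0 1 * starRingEnd ℂ (X 0 1) = 0 := by rw [hbc, hc0]; ring
        simpa using this
      obtain ⟨z, hz⟩ := IsAlgClosed.exists_pow_nat_eq (k := ℂ) (Y 0 1 / X 0 1) zero_lt_two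
      have hz0 : z ≠ 0 := by
        intro h0
        rw [h0] at hz
        exact div_ne_zero hc0 hb0 (by simpa using hz.symm)
      have habs : z * starRingEnd ℂ z = 1 := by
        have h2 : (z * starRingEnd ℂ z) ^ 2 = 1 := by
          have key : (Y 0 1 / X 0 1) * starRingEnd ℂ (Y 0 1 / X 0 1) = 1 := by
            rw [map_div₀]
            rw [div_mul_div_comm, ← hbc]
            exact div_self (mul_ne_zero hb0 (by simpa using hb0))
          calc (z * starRingEnd ℂ z) ^ 2 = z ^ 2 * starRingEnd ℂ (z ^ 2) := by
                rw [map_pow]; ring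
            _ = 1 := by rw [hz]; exact key
        have hreal : z * starRingEnd ℂ z = (Complex.normSq z : ℂ) := Complex.mul_conj z
        rw [hreal] at h2 ⊢
        have h2' : (Complex.normSq z) ^ 2 = 1 := by exact_mod_cast h2
        have hnn : (0:ℝ) ≤ Complex.normSq z := Complex.normSq_nonneg z
        have : Complex.normSq z = 1 := by nlinarith
        rw [this]; norm_num
      have hz2 : z ^ 2 = Y 0 1 / X 0 1 := hz
      have hz2' : z ^ 2 * X 0 1 = Y 0 1 := by rw [hz2, div_mul_cancel₀ _ hb0]
      have hinv : (!![z, 0; 0, z⁻¹] : Matrix (Fin 2) (Fin 2) ℂ)⁻¹ = !![z⁻¹, 0; 0, z] := by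
        refine Matrix.inv_eq_right_inv ?_
        ext i j
        fin_cases i <;> fin_cases j <;>
          simp [Matrix.mul_apply, Fin.sum_univ_two, Matrix.one_apply, hz0]
      refine ⟨!![z, 0; 0, z⁻¹], ?_, by simp, by simp, ?_⟩
      · rw [Matrix.mem_specialUnitaryGroup_iff, Matrix.mem_unitaryGroup_iff]
        constructor
        · ext i j
          fin_cases i <;> fin_cases j
          · simp [Matrix.mul_apply, Fin.sum_univ_two, Matrix.star_apply, Matrix.one_apply,
              Complex.star_def, map_inv₀]
            exact habs
          · simp [Matrix.mul_apply, Fin.sum_univ_two, Matrix.star_apply, Matrix.one_apply]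
          · simp [Matrix.mul_apply, Fin.sum_univ_two, Matrix.star_apply, Matrix.one_apply]
          · simp [Matrix.mul_apply, Fin.sum_univ_two, Matrix.star_apply, Matrix.one_apply,
              Complex.star_def, map_inv₀]
            rw [← mul_inv, habs]; norm_num
        · rw [Matrix.det_fin_two]
          simp [hz0]
      · rw [hinv, Matrix.eta_fin_two X, Matrix.eta_fin_two Y]
        rw [hX10, hX11, hY10, hY11, ← h]
        ext i j
        fin_cases i <;> fin_cases j <;>
          simp [Matrix.mul_apply, Fin.sum_univ_two]
        · rw [mul_comm z (X 0 0), mul_assoc, mul_inv_cancel₀ hz0, mul_one]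
        · linear_combination hz2'
        · have key : starRingEnd ℂ (X 0 1) = z ^ 2 * starRingEnd ℂ (Y 0 1) := by
            have h0 : X 0 1 * (starRingEnd ℂ (X 0 1) - z ^ 2 * starRingEnd ℂ (Y 0 1)) = 0 := by
              linear_combination hbc - starRingEnd ℂ (Y 0 1) * hz2'
            rcases mul_eq_zero.mp h0 with h1 | h1
            · exact absurd h1 hb0
            · linear_combination h1
          field_simp
          linear_combination key
        · field_simp
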